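/- Let (A,μ,α,ε,B) be a quadratic color Hom-associative algebra. Define the color commutator [x,y] = μ(x,y) − ε(x,y)μ(y,x) on homogeneous elements. Then (A,[·,·],α,ε,B) is a quadratic color Hom-Lie algebra; in particular B is invariant for the commutator bracket: B([x,y],z) = B(x,[y,z]). -/

import Mathlib

variable {K : Type*} [Field K] {Γ : Type*} [AddCommGroup Γ]
variable {V : Type*} [AddCommGroup V] [Module K V]

/-- `ε` is a bicharacter on the abelian group `Γ` with values in `K`. -/
def IsBicharacter (ε : Γ → Γ → K) : Prop :=
  (∀ a b, ε a b * ε b a = 1) ∧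
  (∀ a b c, ε a (b + c) = ε a b * ε a c) ∧
  (∀ a b c, ε (a + b) c = ε a c * ε b c)

/-- `(V, G, br, α)` is a color Hom-Lie algebra with bicharacter `ε`:
the bracket respects the grading `G`, `α` is even, the bracket is
`ε`-skew-symmetric on homogeneous elements, and the `ε`-Hom-Jacobi
identity holds on homogeneous elements. -/
def IsColorHomLie (ε : Γ → Γ → K) (G : Γ → Submodule K V)
    (br : V →ₗ[K] V →ₗ[K] V) (α : V →ₗ[K] V) : Prop :=
  (∀ a b, ∀ x ∈ G a, ∀ y ∈ G b, br x y ∈ G (a + b)) ∧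
  (∀ a, ∀ x ∈ G a, α x ∈ G a) ∧
  (∀ a b, ∀ x ∈ G a, ∀ y ∈ G b, br x y = -(ε a b) • br y x) ∧
  (∀ a b c, ∀ x ∈ G a, ∀ y ∈ G b, ∀ z ∈ G c,
    ε c a • br (α x) (br y z) + ε a b • br (α y) (br z x)
      + ε b c • br (α z) (br x y) = 0)

/-- Multiplicativity: `α` is a morphism for the bracket. -/
def IsMult (br : V →ₗ[K] V →ₗ[K] V) (α : V →ₗ[K] V) : Prop :=
  ∀ x y, α (br x y) = br (α x) (α y)

/-- Quadratic color Hom-Lie algebra: a color Hom-Lie algebra with a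
nondegenerate, `ε`-symmetric, invariant bilinear form `B` for which `α`
is `B`-symmetric. -/
def IsQuadColorHomLie (ε : Γ → Γ → K) (G : Γ → Submodule K V)
    (br : V →ₗ[K] V →ₗ[K] V) (α : V →ₗ[K] V)
    (B : V →ₗ[K] V →ₗ[K] K) : Prop :=
  IsColorHomLie ε G br α ∧
  (∀ x, (∀ y, B x y = 0) → x = 0) ∧
  (∀ a b, ∀ x ∈ G a, ∀ y ∈ G b, B x y = ε a b * B y x) ∧
  (∀ x y z, B (br x y) z = B x (br y z)) ∧
  (∀ x y, B (α x) y = B x (α y))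

lemma hom_ind {G : Γ → Submodule K V} (hspan : (⨆ a, G a) = (⊤ : Submodule K V))
    {P : V → Prop} (h0 : P 0) (hadd : ∀ u v, P u → P v → P (u + v))
    (hhom : ∀ a, ∀ x ∈ G a, P x) : ∀ x, P x := by
  intro x
  have hx : x ∈ ⨆ a, G a := by rw [hspan]; trivial
  exact Submodule.iSup_induction (motive := P) G hx hhom h0 hadd


/-- The color commutator `[x,y] = μ(x,y) − ε(x,y)μ(y,x)` of a quadratic color
Hom-associative algebra `(A,μ,α,ε,B)` makes it a quadratic color Hom-Lie
algebra; in particular `B` is invariant for the commutator bracket. -/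
theorem stmt10 (ε : Γ → Γ → K) (hε : IsBicharacter ε)
    (G : Γ → Submodule K V) (μ : V →ₗ[K] V →ₗ[K] V) (α : V →ₗ[K] V)
    (B : V →ₗ[K] V →ₗ[K] K)
    (hspan : (⨆ a, G a) = (⊤ : Submodule K V))
    (hμgr : ∀ a b, ∀ x ∈ G a, ∀ y ∈ G b, μ x y ∈ G (a + b))
    (hαeven : ∀ a, ∀ x ∈ G a, α x ∈ G a)
    (hassoc : ∀ x y z, μ (α x) (μ y z) = μ (μ x y) (α z))
    (hBnd : ∀ x, (∀ y, B x y = 0) → x = 0)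
    (hBsym : ∀ a b, ∀ x ∈ G a, ∀ y ∈ G b, B x y = ε a b * B y x)
    (hBinv : ∀ x y z, B (μ x y) z = B x (μ y z))
    (hBα : ∀ x y, B (α x) y = B x (α y))
    (br : V →ₗ[K] V →ₗ[K] V)
    (hbr : ∀ a b, ∀ x ∈ G a, ∀ y ∈ G b, br x y = μ x y - ε a b • μ y x) :
    IsQuadColorHomLie ε G br α B := by
  obtain ⟨hε1, hε2, hε3⟩ := hε
  -- grading of the bracket
  have hbrgr : ∀ a b, ∀ x ∈ G a, ∀ y ∈ G b, br x y ∈ G (a + b) := by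
    intro a b x hx y hy
    rw [hbr a b x hx y hy]
    exact sub_mem (hμgr a b x hx y hy)
      (Submodule.smul_mem _ _ (by rw [add_comm]; exact hμgr b a y hy x hx))
  refine ⟨⟨hbrgr, hαeven, ?_, ?_⟩, hBnd, hBsym, ?_, hBα⟩
  · -- skew symmetry
    intro a b x hx y hy
    rw [hbr a b x hx y hy, hbr b a y hy x hx]
    match_scalars
    · linear_combination (-1 : K) * hε1 a b
    · ring
  · -- Jacobi identity
    intro a b c x hx y hy z hz
    have hax := hαeven a x hx
    have hay := hαeven b y hy
    have haz := hαeven c z hz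
    rw [hbr a (b + c) (α x) hax (br y z) (hbrgr b c y hy z hz),
      hbr b (c + a) (α y) hay (br z x) (hbrgr c a z hz x hx),
      hbr c (a + b) (α z) haz (br x y) (hbrgr a b x hx y hy),
      hbr b c y hy z hz, hbr c a z hz x hx, hbr a b x hx y hy]
    simp only [map_sub, map_smul, LinearMap.sub_apply, LinearMap.smul_apply,
      hε2, hassoc]
    match_scalars
    · linear_combination (-(ε c a)) * hε1 b c
    · linear_combination (ε b c * ε c a) * hε1 a b
    · linear_combination (-(ε a b)) * hε1 c a
    · linear_combination (ε a b * ε b c) * hε1 c a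
    · linear_combination (ε a b * ε c a) * hε1 b c
    · linear_combination (-(ε b c)) * hε1 a b
  · -- invariance of B
    have key : ∀ a, ∀ x ∈ G a, ∀ b, ∀ y ∈ G b, ∀ c, ∀ z ∈ G c,
        B (br x y) z = B x (br y z) := by
      intro a x hx b y hy c z hz
      rw [hbr a b x hx y hy, hbr b c y hy z hz]
      simp only [map_sub, map_smul, LinearMap.sub_apply, LinearMap.smul_apply,
        smul_eq_mul]
      rw [hBinv x y z, hBinv y x z]
      have h1 : B y (μ x z) = ε b (a + c) * B (μ x z) y :=
        hBsym b (a + c) y hy _ (hμgr a c x hx z hz)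
      have h2 : B x (μ z y) = B (μ x z) y := (hBinv x z y).symm
      rw [h1, h2, hε2]
      linear_combination (-(ε b c * (B ((μ x) z)) y)) * hε1 a b
    -- extend by linearity
    intro x y z
    refine hom_ind hspan (P := fun x => ∀ y z, B (br x y) z = B x (br y z))
      (by simp) (fun u v hu hv y z => by simp [hu y z, hv y z]) ?_ x y z
    intro a x hx
    refine hom_ind hspan (P := fun y => ∀ z, B (br x y) z = B x (br y z))
      (by simp) (fun u v hu hv z => by simp [hu z, hv z]) ?_
    intro b y hy
    refine hom_ind hspan (P := fun z => B (br x y) z = B x (br y z))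
      (by simp) (fun u v hu hv => by simp [hu, hv]) ?_
    intro c z hz
    exact key a x hx b y hy c z hz
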